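/- Let k ≥ 1 and let ι be a finite nonempty index set. Let γ_i, η_i : Fin k → ℝ have nonnegative entries with γ_i ≠ 0 for each i ∈ ι. For X : Fin k → ℝ with all entries positive define λ(X) = max over i ∈ ι of ⟨X,η_i⟩/⟨X,γ_i⟩. If X₀ has all entries positive and is a local minimum of λ on the open positive cone (i.e. there is an open set U containing X₀ such that λ(X₀) ≤ λ(Y) for every Y ∈ U with all entries positive), then λ(X₀) ≤ λ(Y) for every Y : Fin k → ℝ with all entries positive. -/

import Mathlib

open Finset

/-- The displacement function on a simplex: the maximum over the (finitely many)
candidates `i` of the stretching factors `⟨X,η i⟩/⟨X,γ i⟩`. -/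
noncomputable def lamFun {k : ℕ} {ι : Type} [Fintype ι] [Nonempty ι]
    (γ η : ι → Fin k → ℝ) (X : Fin k → ℝ) : ℝ :=
  Finset.univ.sup' Finset.univ_nonempty
    (fun i => (∑ j, X j * η i j) / (∑ j, X j * γ i j))

lemma inner_pos_of_pos {k : ℕ} (γ : Fin k → ℝ) (hnn : ∀ j, 0 ≤ γ j) (hne : γ ≠ 0)
    (X : Fin k → ℝ) (hX : ∀ j, 0 < X j) : 0 < ∑ j, X j * γ j := by
  obtain ⟨j, hj⟩ : ∃ j, γ j ≠ 0 := by
    by_contra h; push_neg at h; exact hne (funext h)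
  refine Finset.sum_pos' (fun j _ => mul_nonneg (hX j).le (hnn j)) ⟨j, Finset.mem_univ j, ?_⟩
  exact mul_pos (hX j) (lt_of_le_of_ne (hnn j) (Ne.symm hj))

/-- Local minima of the displacement function on the open positive cone are
global minima. -/
theorem displacement_local_min_is_global_min
    (k : ℕ) (hk : 1 ≤ k) (ι : Type) [Fintype ι] [Nonempty ι]
    (γ η : ι → Fin k → ℝ)
    (hγnn : ∀ i j, 0 ≤ γ i j) (hγne : ∀ i : ι, γ i ≠ 0)
    (hηnn : ∀ i j, 0 ≤ η i j)
    (X₀ : Fin k → ℝ) (hX₀ : ∀ j, 0 < X₀ j)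
    (U : Set (Fin k → ℝ)) (hU : IsOpen U) (hX₀U : X₀ ∈ U)
    (hmin : ∀ Y ∈ U, (∀ j, 0 < Y j) → lamFun γ η X₀ ≤ lamFun γ η Y) :
    ∀ Y : Fin k → ℝ, (∀ j, 0 < Y j) → lamFun γ η X₀ ≤ lamFun γ η Y := by
  intro Y hY
  by_contra hlt
  push_neg at hlt
  -- choose small t
  obtain ⟨δ, hδ, hball⟩ := Metric.isOpen_iff.1 hU X₀ hX₀U
  set t : ℝ := min (1/2) (δ / (2 * (‖Y - X₀‖ + 1))) with ht
  have hnorm : 0 < ‖Y - X₀‖ + 1 := by positivity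
  have ht0 : 0 < t := lt_min (by norm_num) (by positivity)
  have ht1 : t < 1 := lt_of_le_of_lt (min_le_left _ _) (by norm_num)
  set Z : Fin k → ℝ := fun j => (1 - t) * X₀ j + t * Y j with hZ
  have hZpos : ∀ j, 0 < Z j := fun j =>
    add_pos (mul_pos (by linarith) (hX₀ j)) (mul_pos ht0 (hY j))
  have hZU : Z ∈ U := by
    apply hball
    have : Z - X₀ = t • (Y - X₀) := by
      funext j; simp [hZ]; ring
    rw [Metric.mem_ball, dist_eq_norm, this, norm_smul]
    have h1 : ‖Y - X₀‖ < ‖Y - X₀‖ + 1 := by linarith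
    have h2 : t ≤ δ / (2 * (‖Y - X₀‖ + 1)) := min_le_right _ _
    calc ‖t‖ * ‖Y - X₀‖ ≤ (δ / (2 * (‖Y - X₀‖ + 1))) * (‖Y - X₀‖ + 1) := by
          rw [Real.norm_eq_abs, abs_of_pos ht0]
          exact mul_le_mul h2 (by linarith) (norm_nonneg _) (by positivity)
      _ = δ / 2 := by field_simp
      _ < δ := by linarith
  -- show lamFun γ η Z < lamFun γ η X₀
  have hZlt : lamFun γ η Z < lamFun γ η X₀ := by
    rw [lamFun, Finset.sup'_lt_iff]
    intro i _
    have hc : 0 < ∑ j, X₀ j * γ i j :=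
      inner_pos_of_pos (γ i) (hγnn i) (hγne i) X₀ hX₀
    have hd : 0 < ∑ j, Y j * γ i j :=
      inner_pos_of_pos (γ i) (hγnn i) (hγne i) Y hY
    have hcz : 0 < ∑ j, Z j * γ i j := by
      have : (∑ j, Z j * γ i j) = (1 - t) * (∑ j, X₀ j * γ i j) + t * (∑ j, Y j * γ i j) := by
        simp only [hZ, Finset.mul_sum]
        rw [← Finset.sum_add_distrib]
        congr 1; funext j; ring
      rw [this]; exact add_pos (mul_pos (by linarith) hc) (mul_pos ht0 hd)
    rw [div_lt_iff₀ hcz]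
    have ha : (∑ j, X₀ j * η i j) ≤ (∑ j, X₀ j * γ i j) * lamFun γ η X₀ := by
      have := Finset.le_sup' (fun i => (∑ j, X₀ j * η i j) / (∑ j, X₀ j * γ i j))
        (Finset.mem_univ i)
      rw [div_le_iff₀ hc] at this
      simp only [lamFun]
      linarith
    have hb : (∑ j, Y j * η i j) ≤ (∑ j, Y j * γ i j) * lamFun γ η Y := by
      have := Finset.le_sup' (fun i => (∑ j, Y j * η i j) / (∑ j, Y j * γ i j))
        (Finset.mem_univ i)
      rw [div_le_iff₀ hd] at this
      simp only [lamFun]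
      linarith
    have hnum : (∑ j, Z j * η i j) = (1 - t) * (∑ j, X₀ j * η i j) + t * (∑ j, Y j * η i j) := by
      simp only [hZ, Finset.mul_sum]
      rw [← Finset.sum_add_distrib]
      congr 1; funext j; ring
    have hden : (∑ j, Z j * γ i j) = (1 - t) * (∑ j, X₀ j * γ i j) + t * (∑ j, Y j * γ i j) := by
      simp only [hZ, Finset.mul_sum]
      rw [← Finset.sum_add_distrib]
      congr 1; funext j; ring
    rw [hnum, hden]
    have h1 : (1 - t) * (∑ j, X₀ j * η i j) ≤ (1 - t) * ((∑ j, X₀ j * γ i j) * lamFun γ η X₀) :=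
      mul_le_mul_of_nonneg_left ha (by linarith)
    have h2 : t * (∑ j, Y j * η i j) ≤ t * ((∑ j, Y j * γ i j) * lamFun γ η Y) :=
      mul_le_mul_of_nonneg_left hb ht0.le
    have h3 : t * ((∑ j, Y j * γ i j) * lamFun γ η Y) <
        t * ((∑ j, Y j * γ i j) * lamFun γ η X₀) := by
      apply mul_lt_mul_of_pos_left _ ht0
      exact mul_lt_mul_of_pos_left hlt hd
    nlinarith
  exact absurd (hmin Z hZU hZpos) (not_le.2 hZlt)
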